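/- (a) f ∉ L^1_γ(ℝ^d), i.e. ∫_{ℝ^d} f(x) |x|^{−γ} dx = ∞; (b) |f|_X < ∞; (c) for every r ∈ (0,1), f_r ∈ X, that is f_r ∈ L^1_γ(ℝ^d) and |f_r|_X < ∞; (d) |f − f_r|_X → 0 as r → 0⁺. In particular, a |·|_X-limit of elements of X need not belong to L^1_γ(ℝ^d). -/

import Mathlib

open MeasureTheory Real

/-- The weighted tail integral `∫_{|x| ≥ R} |g(x)| |x|^{-γ} dx`. -/
noncomputable def weightedTail (d : ℕ) (γ : ℝ) (g : EuclideanSpace ℝ (Fin d) → ℝ) (R : ℝ) : ℝ :=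
  ∫ x in {x : EuclideanSpace ℝ (Fin d) | R ≤ ‖x‖}, |g x| * ‖x‖ ^ (-γ)

/-- The set of values whose supremum is the tail seminorm `|g|_X`. -/
def tailSet (d : ℕ) (γ e : ℝ) (g : EuclideanSpace ℝ (Fin d) → ℝ) : Set ℝ :=
  {y : ℝ | ∃ R : ℝ, 0 < R ∧ y = R ^ e * weightedTail d γ g R}

section Aux

open Set

lemma XSNC.oneD_tail_integrable (d : ℕ) (hd : 0 < d) {q c : ℝ} (hc : 0 < c) (hq : q + d < 0) :
    IntegrableOn (fun y : ℝ => y ^ (d - 1) * (if c ≤ y then y ^ q else 0)) (Ioi (0:ℝ)) := by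
  have hexp : (d : ℝ) - 1 + q < -1 := by linarith
  have hI : IntegrableOn (fun y : ℝ => y ^ ((d:ℝ) - 1 + q)) (Ioi c) :=
    integrableOn_Ioi_rpow_of_lt hexp hc
  have hI2 : IntegrableOn (fun y : ℝ => (y:ℝ) ^ (d - 1) * y ^ q) (Ioi c) := by
    refine hI.congr_fun (fun y hy => ?_) measurableSet_Ioi
    have hy0 : (0:ℝ) < y := hc.trans hy
    rw [← Real.rpow_natCast y (d - 1), ← Real.rpow_add hy0]
    congr 1
    push_cast [Nat.cast_sub hd]
    ring
  have hI3 : IntegrableOn (fun y : ℝ => (y:ℝ) ^ (d - 1) * y ^ q) (Ici c) :=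
    Iff.mpr integrableOn_Ici_iff_integrableOn_Ioi hI2
  have heq : (fun y : ℝ => y ^ (d - 1) * (if c ≤ y then y ^ q else 0)) =
      (Ici c).indicator (fun y : ℝ => (y:ℝ) ^ (d - 1) * y ^ q) := by
    funext y
    by_cases h : c ≤ y <;> simp [Set.indicator_apply, mem_Ici, h]
  rw [heq, IntegrableOn, integrable_indicator_iff measurableSet_Ici, IntegrableOn,
    Measure.restrict_restrict measurableSet_Ici,
    inter_eq_left.mpr (show Ici c ⊆ Ioi (0:ℝ) from fun y hy => hc.trans_le hy)]
  exact hI3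

lemma XSNC.oneD_tail_eq (d : ℕ) (hd : 0 < d) {q c : ℝ} (hc : 0 < c) (hq : q + d < 0) :
    ∫ y in Ioi (0:ℝ), y ^ (d - 1) * (if c ≤ y then y ^ q else 0) = -c ^ (q + d) / (q + d) := by
  have hexp : (d : ℝ) - 1 + q < -1 := by linarith
  have heq : (fun y : ℝ => y ^ (d - 1) * (if c ≤ y then y ^ q else 0)) =
      (Ici c).indicator (fun y : ℝ => (y:ℝ) ^ (d - 1) * y ^ q) := by
    funext y
    by_cases h : c ≤ y <;> simp [Set.indicator_apply, mem_Ici, h]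
  rw [heq, setIntegral_indicator measurableSet_Ici,
    inter_eq_right.mpr (show Ici c ⊆ Ioi (0:ℝ) from fun y hy => hc.trans_le hy),
    integral_Ici_eq_integral_Ioi]
  rw [setIntegral_congr_fun (g := fun y : ℝ => y ^ ((d:ℝ) - 1 + q)) measurableSet_Ioi
    (fun y (hy : y ∈ Ioi c) => by
      have hy0 : (0:ℝ) < y := hc.trans hy
      rw [← Real.rpow_natCast y (d - 1), ← Real.rpow_add hy0]
      congr 1
      push_cast [Nat.cast_sub hd]
      ring)]
  rw [integral_Ioi_rpow_of_lt hexp hc]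
  rw [show (d:ℝ) - 1 + q + 1 = q + d by ring]

lemma XSNC.window_indicator (d : ℕ) {q c s : ℝ} :
    (fun y : ℝ => y ^ (d - 1) * (if c ≤ y ∧ y < s then y ^ q else 0)) =
      (Ico c s).indicator (fun y : ℝ => (y:ℝ) ^ (d - 1) * y ^ q) := by
  funext y
  by_cases h : c ≤ y ∧ y < s <;> simp [Set.indicator_apply, mem_Ico, h]

lemma XSNC.oneD_window_integrable (d : ℕ) {q c s : ℝ} (hc : 0 < c) :
    IntegrableOn (fun y : ℝ => y ^ (d - 1) * (if c ≤ y ∧ y < s then y ^ q else 0))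
      (Ioi (0:ℝ)) := by
  have hcont : ContinuousOn (fun y : ℝ => (y:ℝ) ^ (d - 1) * y ^ q) (Icc c s) := by
    apply ContinuousOn.mul (by fun_prop)
    exact fun y hy => (Real.continuousAt_rpow_const y q
      (Or.inl (ne_of_gt (hc.trans_le hy.1)))).continuousWithinAt
  have hI : IntegrableOn (fun y : ℝ => (y:ℝ) ^ (d - 1) * y ^ q) (Ico c s) :=
    (hcont.integrableOn_compact isCompact_Icc).mono_set Ico_subset_Icc_self
  rw [XSNC.window_indicator, IntegrableOn, integrable_indicator_iff measurableSet_Ico,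
    IntegrableOn, Measure.restrict_restrict measurableSet_Ico]
  exact hI.mono_set inter_subset_left

lemma XSNC.oneD_window_eq (d : ℕ) (hd : 0 < d) {q c s : ℝ} (hc : 0 < c) (hcs : c ≤ s)
    (hq : q + d ≠ 0) :
    ∫ y in Ioi (0:ℝ), y ^ (d - 1) * (if c ≤ y ∧ y < s then y ^ q else 0) =
      (s ^ (q + d) - c ^ (q + d)) / (q + d) := by
  have hsub : Ico c s ⊆ Ioi (0:ℝ) := fun y hy => hc.trans_le hy.1
  rw [XSNC.window_indicator, setIntegral_indicator measurableSet_Ico, inter_eq_right.mpr hsub]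
  rw [setIntegral_congr_fun (g := fun y : ℝ => y ^ ((d:ℝ) - 1 + q)) measurableSet_Ico
    (fun y (hy : y ∈ Ico c s) => by
      have hy0 : (0:ℝ) < y := hc.trans_le hy.1
      rw [← Real.rpow_natCast y (d - 1), ← Real.rpow_add hy0]
      congr 1
      push_cast [Nat.cast_sub hd]
      ring)]
  rw [integral_Ico_eq_integral_Ioo, ← integral_Ioc_eq_integral_Ioo,
    ← intervalIntegral.integral_of_le hcs]
  rw [integral_rpow (Or.inr ⟨by intro h; apply hq; have : (d:ℝ) - 1 + q = -1 := h; linarith,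
    fun h => absurd h.1 (not_le.mpr (lt_min hc (hc.trans_le hcs)))⟩)]
  rw [show (d:ℝ) - 1 + q + 1 = q + d by ring]

/-- Normalizing constant `d · vol(B(0,1))`. -/
noncomputable def XSNC.Kc (d : ℕ) : ℝ :=
  (d : ℝ) * (volume (Metric.ball (0 : EuclideanSpace ℝ (Fin d)) 1)).toReal

lemma XSNC.Kc_pos (d : ℕ) (hd : 0 < d) : 0 < XSNC.Kc d := by
  haveI : Nontrivial (EuclideanSpace ℝ (Fin d)) :=
    Module.nontrivial_of_finrank_pos (R := ℝ) (by rw [finrank_euclideanSpace_fin]; exact hd)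
  refine mul_pos (by exact_mod_cast hd) ?_
  rw [ENNReal.toReal_pos_iff]
  exact ⟨Metric.measure_ball_pos _ _ one_pos, measure_ball_lt_top⟩

lemma XSNC.transfer_norm (d : ℕ) (hd : 0 < d) (H : EuclideanSpace ℝ (Fin d) → ℝ) (G : ℝ → ℝ)
    (h : ∀ x, H x = G ‖x‖) :
    ∫ x, H x = XSNC.Kc d * ∫ y in Ioi (0:ℝ), y ^ (d - 1) * G y := by
  haveI : Nontrivial (EuclideanSpace ℝ (Fin d)) :=
    Module.nontrivial_of_finrank_pos (R := ℝ) (by rw [finrank_euclideanSpace_fin]; exact hd)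
  have h2 : ∫ x, H x = ∫ x : EuclideanSpace ℝ (Fin d), G ‖x‖ := by simp only [h]
  rw [h2, MeasureTheory.integral_fun_norm_addHaar (volume : Measure (EuclideanSpace ℝ (Fin d))) G]
  simp [XSNC.Kc, finrank_euclideanSpace_fin, mul_assoc, smul_eq_mul, measureReal_def]

lemma XSNC.weightedTail_transfer (d : ℕ) (hd : 0 < d) (γ : ℝ)
    (g : EuclideanSpace ℝ (Fin d) → ℝ) (G : ℝ → ℝ) (R : ℝ)
    (hG : ∀ x : EuclideanSpace ℝ (Fin d), (if R ≤ ‖x‖ then |g x| * ‖x‖ ^ (-γ) else 0) = G ‖x‖) :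
    weightedTail d γ g R = XSNC.Kc d * ∫ y in Ioi (0:ℝ), y ^ (d - 1) * G y := by
  have hS : MeasurableSet {x : EuclideanSpace ℝ (Fin d) | R ≤ ‖x‖} :=
    measurableSet_le measurable_const measurable_norm
  rw [weightedTail, ← integral_indicator hS]
  exact XSNC.transfer_norm d hd _ G (fun x => by
    rw [Set.indicator_apply]
    simpa [Set.mem_setOf_eq] using hG x)

end Aux
set_option maxHeartbeats 1000000 in
/-- A `|·|_X`-limit of elements of `X` need not belong to `L¹_γ(ℝ^d)`: the function `f`
below is not weighted-integrable, has finite tail seminorm, and is the `|·|_X`-limit of its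
truncations `f_r ∈ X` as `r → 0⁺`. -/
theorem X_seminorm_not_complete
    (d : ℕ) (hd : 3 ≤ d) (γ β m : ℝ)
    (hγ : γ < d) (hβ1 : γ - 2 < β) (hβ2 : β ≤ γ * ((d : ℝ) - 2) / d)
    (hm1 : ((d : ℝ) - 2 - β) / ((d : ℝ) - γ) < m) (hm2 : m < 1)
    (σ e : ℝ) (hσ : σ = 2 + β - γ) (he : e = σ / (1 - m) - ((d : ℝ) - γ))
    (ε : ℝ) (hε0 : 0 < ε) (hε1 : ε < σ / (1 - m) - ((d : ℝ) - γ))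
    (f : EuclideanSpace ℝ (Fin d) → ℝ)
    (hf : ∀ x : EuclideanSpace ℝ (Fin d),
      f x = if 1 ≤ ‖x‖ then ‖x‖ ^ (-(σ / (1 - m))) else ‖x‖ ^ (-((d : ℝ) - γ) - ε))
    (fr : ℝ → EuclideanSpace ℝ (Fin d) → ℝ)
    (hfr : ∀ r : ℝ, ∀ x : EuclideanSpace ℝ (Fin d),
      fr r x = if r ≤ ‖x‖ then f x else 0) :
    (∫⁻ x : EuclideanSpace ℝ (Fin d), ENNReal.ofReal (f x * ‖x‖ ^ (-γ)) = ⊤) ∧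
    BddAbove (tailSet d γ e f) ∧
    (∀ r : ℝ, 0 < r → r < 1 →
      Integrable (fun x : EuclideanSpace ℝ (Fin d) => |fr r x| * ‖x‖ ^ (-γ)) ∧
        BddAbove (tailSet d γ e (fr r))) ∧
    Filter.Tendsto (fun r : ℝ => sSup (tailSet d γ e (fun x => f x - fr r x)))
      (nhdsWithin 0 (Set.Ioi 0)) (nhds 0) := by
  classical
  set p := σ / (1 - m) with hp
  have hd0 : 0 < d := by omega
  have heε : ε < e := by rw [he]; exact hε1
  have he0 : 0 < e := hε0.trans heε
  have hpe : p + γ = (d : ℝ) + e := by rw [he]; ring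
  have hK0 : 0 < XSNC.Kc d := XSNC.Kc_pos d hd0
  have hfnn : ∀ x : EuclideanSpace ℝ (Fin d), 0 ≤ f x := by
    intro x; rw [hf x]
    split <;> exact Real.rpow_nonneg (norm_nonneg x) _
  have hSmeas : MeasurableSet {x : EuclideanSpace ℝ (Fin d) | (1:ℝ) ≤ ‖x‖} :=
    measurableSet_le measurable_const measurable_norm
  -- tail formula for R ≥ 1
  have hTf1 : ∀ R : ℝ, 1 ≤ R → weightedTail d γ f R = XSNC.Kc d * (R ^ (-e) / e) := by
    intro R hR1
    have hR0 : (0:ℝ) < R := lt_of_lt_of_le one_pos hR1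
    rw [XSNC.weightedTail_transfer d hd0 γ f
      (fun y => if R ≤ y then y ^ (-((d:ℝ) + e)) else 0) R (fun x => by
        by_cases hx : R ≤ ‖x‖
        · have h1x : (1:ℝ) ≤ ‖x‖ := le_trans hR1 hx
          have hx0 : (0:ℝ) < ‖x‖ := lt_of_lt_of_le hR0 hx
          rw [if_pos hx, if_pos hx, hf x, if_pos h1x,
            abs_of_nonneg (Real.rpow_nonneg (norm_nonneg x) _), ← Real.rpow_add hx0]
          congr 1
          linarith
        · rw [if_neg hx, if_neg hx])]
    rw [XSNC.oneD_tail_eq d hd0 hR0 (q := -((d:ℝ) + e)) (by linarith)]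
    rw [show -((d:ℝ) + e) + d = -e by ring, neg_div_neg_eq]
  -- tail formula for 0 < R < 1
  have hTf2 : ∀ R : ℝ, 0 < R → R < 1 →
      weightedTail d γ f R = XSNC.Kc d * (1 / e + (R ^ (-ε) - 1) / ε) := by
    intro R hR0 hR1
    rw [XSNC.weightedTail_transfer d hd0 γ f
      (fun y => (if (1:ℝ) ≤ y then y ^ (-((d:ℝ) + e)) else 0) +
        (if R ≤ y ∧ y < 1 then y ^ (-((d:ℝ) + ε)) else 0)) R (fun x => by
        by_cases hx : R ≤ ‖x‖
        · have hx0 : (0:ℝ) < ‖x‖ := lt_of_lt_of_le hR0 hx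
          rw [if_pos hx, hf x]
          by_cases h1 : (1:ℝ) ≤ ‖x‖
          · rw [if_pos h1, if_pos h1, if_neg (fun h => absurd h.2 (not_lt.mpr h1)), add_zero,
              abs_of_nonneg (Real.rpow_nonneg (norm_nonneg x) _), ← Real.rpow_add hx0]
            congr 1
            linarith
          · rw [if_neg h1, if_neg h1, if_pos ⟨hx, lt_of_not_ge h1⟩, zero_add,
              abs_of_nonneg (Real.rpow_nonneg (norm_nonneg x) _), ← Real.rpow_add hx0]
            congr 1
            push_cast
            ring
        · have h1 : ¬ (1:ℝ) ≤ ‖x‖ := fun h => hx (le_trans hR1.le h)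
          rw [if_neg hx, if_neg h1, if_neg (fun h => hx h.1), add_zero])]
    have hsplit : (fun y : ℝ => y ^ (d - 1) *
        ((if (1:ℝ) ≤ y then y ^ (-((d:ℝ) + e)) else 0) +
          (if R ≤ y ∧ y < 1 then y ^ (-((d:ℝ) + ε)) else 0))) =
        (fun y : ℝ => y ^ (d - 1) * (if (1:ℝ) ≤ y then y ^ (-((d:ℝ) + e)) else 0) +
          y ^ (d - 1) * (if R ≤ y ∧ y < 1 then y ^ (-((d:ℝ) + ε)) else 0)) := by
      funext y; ring
    rw [hsplit, integral_add (XSNC.oneD_tail_integrable d hd0 one_pos (by linarith))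
      (XSNC.oneD_window_integrable d hR0)]
    rw [XSNC.oneD_tail_eq d hd0 one_pos (q := -((d:ℝ) + e)) (by linarith),
      XSNC.oneD_window_eq d hd0 hR0 hR1.le (q := -((d:ℝ) + ε)) (by intro h; nlinarith)]
    rw [show -((d:ℝ) + e) + d = -e by ring, show -((d:ℝ) + ε) + d = -ε by ring]
    rw [Real.one_rpow, Real.one_rpow]
    rw [show (-(1:ℝ))/(-e) = 1/e by rw [neg_div_neg_eq], show ((1:ℝ) - R ^ (-ε))/(-ε) = (R ^ (-ε) - 1)/ε by rw [← neg_div_neg_eq]; ring_nf]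

  -- nonnegativity of tails
  have hTnn : ∀ (g : EuclideanSpace ℝ (Fin d) → ℝ) (R : ℝ), 0 ≤ weightedTail d γ g R := by
    intro g R
    exact setIntegral_nonneg (measurableSet_le measurable_const measurable_norm)
      (fun x _ => mul_nonneg (abs_nonneg _) (Real.rpow_nonneg (norm_nonneg x) _))
  -- uniform bound for f
  have hMbound : ∀ R : ℝ, 0 < R →
      R ^ e * weightedTail d γ f R ≤ XSNC.Kc d * (1 / e + 1 / ε) := by
    intro R hR0
    by_cases hR1 : 1 ≤ R
    · rw [hTf1 R hR1]
      have hcancel : R ^ e * R ^ (-e) = 1 := by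
        rw [← Real.rpow_add hR0]
        simp
      have h1 : R ^ e * (XSNC.Kc d * (R ^ (-e) / e)) = XSNC.Kc d / e := by
        field_simp
        nlinarith [hcancel]
      rw [h1]
      have hKε : 0 ≤ XSNC.Kc d / ε := div_nonneg hK0.le hε0.le
      have h2 : XSNC.Kc d * (1 / e + 1 / ε) = XSNC.Kc d / e + XSNC.Kc d / ε := by ring
      linarith
    · push_neg at hR1
      rw [hTf2 R hR0 hR1]
      have hu1 : R ^ e ≤ 1 := Real.rpow_le_one hR0.le hR1.le he0.le
      have hu0 : 0 ≤ R ^ e := Real.rpow_nonneg hR0.le _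
      have hv1 : 1 ≤ R ^ (-ε) :=
        Real.one_le_rpow_of_pos_of_le_one_of_nonpos hR0 hR1.le (by linarith)
      have huv : R ^ e * R ^ (-ε) ≤ 1 := by
        rw [← Real.rpow_add hR0]
        exact Real.rpow_le_one hR0.le hR1.le (by linarith)
      have key : R ^ e * (1 / e + (R ^ (-ε) - 1) / ε) ≤ 1 / e + 1 / ε := by
        have h1 : R ^ e * (1 / e) ≤ 1 / e :=
          mul_le_of_le_one_left (one_div_nonneg.mpr he0.le) hu1
        have h2 : R ^ e * ((R ^ (-ε) - 1) / ε) ≤ 1 / ε := by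
          rw [show R ^ e * ((R ^ (-ε) - 1) / ε) = (R ^ e * R ^ (-ε) - R ^ e) / ε by ring]
          exact (div_le_div_iff_of_pos_right hε0).mpr (by linarith)
        linarith
      calc R ^ e * (XSNC.Kc d * (1 / e + (R ^ (-ε) - 1) / ε))
          = XSNC.Kc d * (R ^ e * (1 / e + (R ^ (-ε) - 1) / ε)) := by ring
        _ ≤ XSNC.Kc d * (1 / e + 1 / ε) := by
            apply mul_le_mul_of_nonneg_left key hK0.le
  -- truncated tails equal shifted tails
  have hTfr : ∀ r R : ℝ, weightedTail d γ (fr r) R = weightedTail d γ f (max r R) := by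
    intro r R
    have hSR : MeasurableSet {x : EuclideanSpace ℝ (Fin d) | R ≤ ‖x‖} :=
      measurableSet_le measurable_const measurable_norm
    have hSr : MeasurableSet {x : EuclideanSpace ℝ (Fin d) | r ≤ ‖x‖} :=
      measurableSet_le measurable_const measurable_norm
    rw [weightedTail, weightedTail]
    rw [setIntegral_congr_fun (g := fun x =>
        Set.indicator {x : EuclideanSpace ℝ (Fin d) | r ≤ ‖x‖}
          (fun x => |f x| * ‖x‖ ^ (-γ)) x) hSR
      (fun x _ => by
        dsimp only
        rw [hfr r x, Set.indicator_apply]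
        by_cases h : r ≤ ‖x‖ <;> simp [Set.mem_setOf_eq, h])]
    rw [setIntegral_indicator hSr]
    rw [show {x : EuclideanSpace ℝ (Fin d) | R ≤ ‖x‖} ∩ {x : EuclideanSpace ℝ (Fin d) | r ≤ ‖x‖}
        = {x : EuclideanSpace ℝ (Fin d) | max r R ≤ ‖x‖} from by
      ext x; simp [Set.mem_setOf_eq, max_le_iff, and_comm]]
  -- vanishing of the difference tails for r ≤ R
  have hTd0 : ∀ r R : ℝ, r ≤ R →
      weightedTail d γ (fun x => f x - fr r x) R = 0 := by
    intro r R hrR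
    rw [weightedTail]
    rw [setIntegral_congr_fun (g := fun _ => (0:ℝ))
      (measurableSet_le measurable_const measurable_norm)
      (fun x hx => by
        have hrx : r ≤ ‖x‖ := le_trans hrR hx
        rw [hfr r x, if_pos hrx]
        simp)]
    simp
  -- the difference tails for R < r ≤ 1
  have hTd : ∀ r R : ℝ, 0 < R → R < r → r ≤ 1 →
      weightedTail d γ (fun x => f x - fr r x) R
        = XSNC.Kc d * ((R ^ (-ε) - r ^ (-ε)) / ε) := by
    intro r R hR0 hRr hr1
    rw [XSNC.weightedTail_transfer d hd0 γ (fun x => f x - fr r x)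
      (fun y => if R ≤ y ∧ y < r then y ^ (-((d:ℝ) + ε)) else 0) R (fun x => by
        by_cases hx : R ≤ ‖x‖
        · rw [if_pos hx]
          have hx0 : (0:ℝ) < ‖x‖ := lt_of_lt_of_le hR0 hx
          by_cases hxr : ‖x‖ < r
          · have h1 : ¬ (1:ℝ) ≤ ‖x‖ := fun h => absurd (lt_of_lt_of_le hxr hr1) (not_lt.mpr h)
            rw [hfr r x, if_neg (not_le.mpr hxr), sub_zero, hf x, if_neg h1,
              if_pos ⟨hx, hxr⟩, abs_of_nonneg (Real.rpow_nonneg (norm_nonneg x) _),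
              ← Real.rpow_add hx0]
            congr 1
            ring
          · rw [hfr r x, if_pos (not_lt.mp hxr), sub_self, abs_zero, zero_mul,
              if_neg (fun h => hxr h.2)]
        · rw [if_neg hx, if_neg (fun h => hx h.1)])]
    rw [XSNC.oneD_window_eq d hd0 hR0 hRr.le (q := -((d:ℝ) + ε)) (by intro h; nlinarith)]
    rw [show -((d:ℝ) + ε) + d = -ε by ring]
    rw [show (r ^ (-ε) - R ^ (-ε)) / (-ε) = (R ^ (-ε) - r ^ (-ε)) / ε from by
      rw [← neg_div_neg_eq]; ring_nf]

  -- membership of 0 and upper bounds for the difference tails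
  have h0mem : ∀ r : ℝ, 0 < r → (0:ℝ) ∈ tailSet d γ e (fun x => f x - fr r x) := by
    intro r hr0
    exact ⟨max r 1, lt_of_lt_of_le one_pos (le_max_right r 1), by
      rw [hTd0 r (max r 1) (le_max_left r 1), mul_zero]⟩
  have hub : ∀ r : ℝ, 0 < r → r < 1 → ∀ y ∈ tailSet d γ e (fun x => f x - fr r x),
      y ≤ XSNC.Kc d / ε * r ^ (e - ε) := by
    rintro r hr0 hr1 y ⟨R, hR0, rfl⟩
    by_cases hrR : r ≤ R
    · rw [hTd0 r R hrR, mul_zero]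
      have : 0 ≤ r ^ (e - ε) := Real.rpow_nonneg hr0.le _
      have : 0 ≤ XSNC.Kc d / ε := div_nonneg hK0.le hε0.le
      positivity
    · push_neg at hrR
      rw [hTd r R hR0 hrR hr1.le]
      have h1 : R ^ e * (R ^ (-ε) - r ^ (-ε)) ≤ r ^ (e - ε) := by
        have hRe : R ^ e * R ^ (-ε) = R ^ (e - ε) := by
          rw [← Real.rpow_add hR0]; ring_nf
        have hmono : R ^ (e - ε) ≤ r ^ (e - ε) :=
          Real.rpow_le_rpow hR0.le hrR.le (by linarith)
        have hnn : 0 ≤ R ^ e * r ^ (-ε) :=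
          mul_nonneg (Real.rpow_nonneg hR0.le _) (Real.rpow_nonneg hr0.le _)
        nlinarith
      calc R ^ e * (XSNC.Kc d * ((R ^ (-ε) - r ^ (-ε)) / ε))
          = XSNC.Kc d / ε * (R ^ e * (R ^ (-ε) - r ^ (-ε))) := by ring
        _ ≤ XSNC.Kc d / ε * r ^ (e - ε) :=
            mul_le_mul_of_nonneg_left h1 (div_nonneg hK0.le hε0.le)
  have hBdd : ∀ r : ℝ, 0 < r → r < 1 → BddAbove (tailSet d γ e (fun x => f x - fr r x)) :=
    fun r hr0 hr1 => ⟨_, fun y hy => hub r hr0 hr1 y hy⟩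
  refine ⟨?_, ?_, ?_, ?_⟩
  · -- part (a): the lintegral is infinite
    have hgmeas : Measurable (fun x : EuclideanSpace ℝ (Fin d) => f x * ‖x‖ ^ (-γ)) := by
      have hfeq : (fun x : EuclideanSpace ℝ (Fin d) => f x * ‖x‖ ^ (-γ)) =
          fun x => (if 1 ≤ ‖x‖ then ‖x‖ ^ (-p) else ‖x‖ ^ (-((d:ℝ) - γ) - ε)) * ‖x‖ ^ (-γ) := by
        funext x; rw [hf x]
      rw [hfeq]
      exact Measurable.mul (Measurable.ite (measurableSet_le measurable_const measurable_norm)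
        (by fun_prop) (by fun_prop)) (by fun_prop)
    have hgnn : ∀ x : EuclideanSpace ℝ (Fin d), 0 ≤ f x * ‖x‖ ^ (-γ) :=
      fun x => mul_nonneg (hfnn x) (Real.rpow_nonneg (norm_nonneg x) _)
    have hnotint : ¬ Integrable (fun x : EuclideanSpace ℝ (Fin d) => f x * ‖x‖ ^ (-γ)) volume := by
      intro hInt
      set I := ∫ x : EuclideanSpace ℝ (Fin d), f x * ‖x‖ ^ (-γ) with hIdef
      have hle : ∀ R : ℝ, weightedTail d γ f R ≤ I := by
        intro R
        rw [weightedTail,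
          setIntegral_congr_fun (g := fun x : EuclideanSpace ℝ (Fin d) => f x * ‖x‖ ^ (-γ))
            (measurableSet_le measurable_const measurable_norm)
            (fun x _ => by rw [abs_of_nonneg (hfnn x)])]
        exact setIntegral_le_integral hInt (Filter.Eventually.of_forall hgnn)
      set c1 : ℝ := max (I * ε / XSNC.Kc d + 1) 1 + 1 with hc1def
      have hmax1 : (1:ℝ) ≤ max (I * ε / XSNC.Kc d + 1) 1 := le_max_right _ _
      have hc1pos : 0 < c1 := by rw [hc1def]; linarith
      set x0 : ℝ := c1 ^ (-(1/ε)) with hx0def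
      have hx0pos : 0 < x0 := Real.rpow_pos_of_pos hc1pos _
      set R := min (1/2) x0 with hRdef
      have hR0 : 0 < R := lt_min (by norm_num) hx0pos
      have hR1 : R < 1 := lt_of_le_of_lt (min_le_left _ _) (by norm_num)
      have hRx0 : R ≤ x0 := min_le_right _ _
      have hx0e : x0 ^ (-ε) = c1 := by
        rw [hx0def, ← Real.rpow_mul hc1pos.le, show -(1/ε) * -ε = 1 by field_simp,
          Real.rpow_one]
      have hRε : c1 ≤ R ^ (-ε) := by
        rw [← hx0e]
        exact Real.rpow_le_rpow_of_nonpos hR0 hRx0 (by linarith)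
      have hcontr := hle R
      rw [hTf2 R hR0 hR1] at hcontr
      have h2 : I * ε / XSNC.Kc d + 2 ≤ c1 := by
        have := le_max_left (I * ε / XSNC.Kc d + 1) 1
        rw [hc1def]; linarith
      clear_value I c1 x0 R
      have h3 : I * ε / XSNC.Kc d + 1 ≤ R ^ (-ε) - 1 := by linarith
      have h4 : XSNC.Kc d * ((I * ε / XSNC.Kc d + 1) / ε) ≤ XSNC.Kc d * ((R ^ (-ε) - 1) / ε) :=
        mul_le_mul_of_nonneg_left ((div_le_div_iff_of_pos_right hε0).mpr h3) hK0.le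
      have h5 : XSNC.Kc d * ((I * ε / XSNC.Kc d + 1) / ε) = I + XSNC.Kc d / ε := by
        field_simp
      have h6 : 0 < XSNC.Kc d * (1 / e) := by positivity
      have h7 : XSNC.Kc d * (1 / e + (R ^ (-ε) - 1) / ε)
          = XSNC.Kc d * (1 / e) + XSNC.Kc d * ((R ^ (-ε) - 1) / ε) := by ring
      have h8 : 0 < XSNC.Kc d / ε := div_pos hK0 hε0
      linarith
    by_contra htop
    have hfin : HasFiniteIntegral (fun x : EuclideanSpace ℝ (Fin d) => f x * ‖x‖ ^ (-γ)) volume :=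
      (hasFiniteIntegral_iff_ofReal (Filter.Eventually.of_forall hgnn)).mpr
        (lt_top_iff_ne_top.mpr htop)
    exact hnotint ⟨hgmeas.aestronglyMeasurable, hfin⟩
  · -- part (b)
    exact ⟨XSNC.Kc d * (1 / e + 1 / ε), by rintro y ⟨R, hR0, rfl⟩; exact hMbound R hR0⟩
  · -- part (c)
    intro r hr0 hr1
    constructor
    · -- integrability of the truncation
      have hsum : (Module.finrank ℝ (EuclideanSpace ℝ (Fin d)) : ℝ) < (d:ℝ) + ε := by
        rw [finrank_euclideanSpace_fin]; linarith
      have hint : Integrable (fun x : EuclideanSpace ℝ (Fin d) =>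
          (2 ^ ((d:ℝ) + ε) * r ^ (-((d:ℝ) + ε))) * (1 + ‖x‖) ^ (-((d:ℝ) + ε))) volume :=
        (integrable_one_add_norm hsum).const_mul _
      have hC0 : 0 < 2 ^ ((d:ℝ) + ε) * r ^ (-((d:ℝ) + ε)) :=
        mul_pos (Real.rpow_pos_of_pos two_pos _) (Real.rpow_pos_of_pos hr0 _)
      have hr1' : (1:ℝ) ≤ r ^ (-((d:ℝ) + ε)) :=
        Real.one_le_rpow_of_pos_of_le_one_of_nonpos hr0 hr1.le
          (by have : (0:ℝ) ≤ d := Nat.cast_nonneg d; linarith)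
      refine hint.mono ?_ (Filter.Eventually.of_forall fun x => ?_)
      · have heq2 : (fun x : EuclideanSpace ℝ (Fin d) => |fr r x| * ‖x‖ ^ (-γ)) =
            fun x => |if r ≤ ‖x‖ then
              (if 1 ≤ ‖x‖ then ‖x‖ ^ (-p) else ‖x‖ ^ (-((d:ℝ) - γ) - ε)) else 0| * ‖x‖ ^ (-γ) := by
          funext x; rw [hfr r x, hf x]
        rw [heq2]
        apply Measurable.aestronglyMeasurable
        apply Measurable.mul ?_ (by fun_prop)
        apply Measurable.abs
        exact Measurable.ite (measurableSet_le measurable_const measurable_norm)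
          (Measurable.ite (measurableSet_le measurable_const measurable_norm)
            (by fun_prop) (by fun_prop)) measurable_const
      · -- pointwise bound
        have hBnn : 0 ≤ (1 + ‖x‖) ^ (-((d:ℝ) + ε)) :=
          Real.rpow_nonneg (by positivity) _
        rw [Real.norm_eq_abs, Real.norm_eq_abs,
          abs_of_nonneg (mul_nonneg (abs_nonneg _) (Real.rpow_nonneg (norm_nonneg x) _)),
          abs_of_nonneg (mul_nonneg hC0.le hBnn)]
        by_cases hrx : r ≤ ‖x‖
        · have hx0 : (0:ℝ) < ‖x‖ := lt_of_lt_of_le hr0 hrx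
          have h2x : (0:ℝ) < 1 + ‖x‖ := by positivity
          have hts : (2:ℝ) ^ ((d:ℝ) + ε) * 2 ^ (-((d:ℝ) + ε)) = 1 := by
            rw [← Real.rpow_add two_pos, add_neg_cancel, Real.rpow_zero]
          rw [hfr r x, if_pos hrx, abs_of_nonneg (hfnn x), hf x]
          by_cases h1 : (1:ℝ) ≤ ‖x‖
          · rw [if_pos h1, ← Real.rpow_add hx0]
            have hstep1 : ‖x‖ ^ (-p + -γ) ≤ ‖x‖ ^ (-((d:ℝ) + ε)) :=
              Real.rpow_le_rpow_of_exponent_le h1 (by linarith)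
            have hstep2 : (2 * ‖x‖) ^ (-((d:ℝ) + ε)) ≤ (1 + ‖x‖) ^ (-((d:ℝ) + ε)) :=
              Real.rpow_le_rpow_of_nonpos h2x (by linarith)
                (by have : (0:ℝ) ≤ d := Nat.cast_nonneg d; linarith)
            have hmulr : (2 * ‖x‖) ^ (-((d:ℝ) + ε))
                = 2 ^ (-((d:ℝ) + ε)) * ‖x‖ ^ (-((d:ℝ) + ε)) :=
              Real.mul_rpow (by norm_num) (norm_nonneg x)
            have hA : ‖x‖ ^ (-((d:ℝ) + ε))
                ≤ 2 ^ ((d:ℝ) + ε) * (1 + ‖x‖) ^ (-((d:ℝ) + ε)) := by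
              have h9 := mul_le_mul_of_nonneg_left hstep2
                (Real.rpow_nonneg (by norm_num : (0:ℝ) ≤ 2) ((d:ℝ) + ε))
              rw [hmulr] at h9
              nlinarith [Real.rpow_nonneg (norm_nonneg x) (-((d:ℝ) + ε))]
            calc ‖x‖ ^ (-p + -γ) ≤ ‖x‖ ^ (-((d:ℝ) + ε)) := hstep1
              _ ≤ 2 ^ ((d:ℝ) + ε) * (1 + ‖x‖) ^ (-((d:ℝ) + ε)) := hA
              _ ≤ 2 ^ ((d:ℝ) + ε) * r ^ (-((d:ℝ) + ε)) * (1 + ‖x‖) ^ (-((d:ℝ) + ε)) := by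
                  nlinarith [mul_nonneg (Real.rpow_nonneg (by norm_num : (0:ℝ) ≤ 2) ((d:ℝ) + ε))
                    hBnn, hr1']
          · rw [if_neg h1, ← Real.rpow_add hx0,
              show -((d:ℝ) - γ) - ε + -γ = -((d:ℝ) + ε) by ring]
            have hstep1 : ‖x‖ ^ (-((d:ℝ) + ε)) ≤ r ^ (-((d:ℝ) + ε)) :=
              Real.rpow_le_rpow_of_nonpos hr0 hrx
                (by have : (0:ℝ) ≤ d := Nat.cast_nonneg d; linarith)
            have hstep2 : (2:ℝ) ^ (-((d:ℝ) + ε)) ≤ (1 + ‖x‖) ^ (-((d:ℝ) + ε)) :=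
              Real.rpow_le_rpow_of_nonpos h2x (by push_neg at h1; linarith)
                (by have : (0:ℝ) ≤ d := Nat.cast_nonneg d; linarith)
            calc ‖x‖ ^ (-((d:ℝ) + ε)) ≤ r ^ (-((d:ℝ) + ε)) := hstep1
              _ = 2 ^ ((d:ℝ) + ε) * r ^ (-((d:ℝ) + ε)) * 2 ^ (-((d:ℝ) + ε)) := by
                  rw [show (2:ℝ) ^ ((d:ℝ) + ε) * r ^ (-((d:ℝ) + ε)) * 2 ^ (-((d:ℝ) + ε))
                    = (2 ^ ((d:ℝ) + ε) * 2 ^ (-((d:ℝ) + ε))) * r ^ (-((d:ℝ) + ε)) by ring, hts,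
                    one_mul]
              _ ≤ 2 ^ ((d:ℝ) + ε) * r ^ (-((d:ℝ) + ε)) * (1 + ‖x‖) ^ (-((d:ℝ) + ε)) :=
                  mul_le_mul_of_nonneg_left hstep2 hC0.le
        · rw [hfr r x, if_neg hrx, abs_zero, zero_mul]
          positivity
    · -- boundedness of the truncated tail set
      refine ⟨XSNC.Kc d * (1 / e + 1 / ε), ?_⟩
      rintro y ⟨R, hR0, rfl⟩
      rw [hTfr r R]
      have hmax0 : 0 < max r R := lt_of_lt_of_le hR0 (le_max_right r R)
      calc R ^ e * weightedTail d γ f (max r R)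
          ≤ (max r R) ^ e * weightedTail d γ f (max r R) :=
            mul_le_mul_of_nonneg_right
              (Real.rpow_le_rpow hR0.le (le_max_right r R) he0.le) (hTnn f _)
        _ ≤ XSNC.Kc d * (1 / e + 1 / ε) := hMbound _ hmax0
  · -- part (d)
    apply tendsto_of_tendsto_of_tendsto_of_le_of_le' (g := fun _ : ℝ => (0:ℝ))
      (h := fun r : ℝ => XSNC.Kc d / ε * r ^ (e - ε)) tendsto_const_nhds ?_ ?_ ?_
    · have h1 := (Real.continuousAt_rpow_const 0 (e - ε) (Or.inr (by linarith))).tendsto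
      have h2 : (0:ℝ) ^ (e - ε) = 0 := Real.zero_rpow (ne_of_gt (by linarith))
      rw [h2] at h1
      have h3 : Filter.Tendsto (fun r : ℝ => r ^ (e - ε)) (nhdsWithin 0 (Set.Ioi 0)) (nhds 0) :=
        h1.mono_left nhdsWithin_le_nhds
      simpa using h3.const_mul (XSNC.Kc d / ε)
    · filter_upwards [Ioo_mem_nhdsGT_of_mem (Set.mem_Ico.mpr ⟨le_refl (0:ℝ), one_pos⟩)] with r hr
      exact le_csSup (hBdd r hr.1 hr.2) (h0mem r hr.1)
    · filter_upwards [Ioo_mem_nhdsGT_of_mem (Set.mem_Ico.mpr ⟨le_refl (0:ℝ), one_pos⟩)] with r hr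
      exact csSup_le ⟨0, h0mem r hr.1⟩ (hub r hr.1 hr.2)
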